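/- The product Lie algebra g × h decomposes as the direct sum of vector subspaces g × h = η₊(b₊) ⊕ η₋(b₋); that is, every element (x, a) ∈ g × h can be written uniquely as η₊(u) + η₋(v) with u ∈ b₊, v ∈ b₋. -/

import Mathlib

/- STATEMENT 1: With `g = nm ⊕ H ⊕ np`, `b₊ = H ⊕ np`, `b₋ = H ⊕ nm`,
`η₊ x = (x, πp x)`, `η₋ x = (x, -πm x)`, the product Lie algebra `g × H`
decomposes as the direct sum of vector subspaces `g × H = η₊(b₊) ⊕ η₋(b₋)`:
every element `(x, a)` with `a ∈ H` is uniquely `η₊(u) + η₋(v)` with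
`u ∈ b₊`, `v ∈ b₋`. -/
theorem statement1
    {k : Type*} [Field k] [CharZero k]
    {L : Type*} [LieRing L] [LieAlgebra k L]
    (H np nm : LieSubalgebra k L)
    (habel : ∀ a ∈ H, ∀ b ∈ H, ⁅a, b⁆ = (0 : L))
    (hnp : ∀ a ∈ H, ∀ u ∈ np, ⁅a, u⁆ ∈ np)
    (hnm : ∀ a ∈ H, ∀ v ∈ nm, ⁅a, v⁆ ∈ nm)
    (hspan : ∀ x : L, ∃ v ∈ nm, ∃ a ∈ H, ∃ u ∈ np, x = v + a + u)
    (huniq : ∀ v ∈ nm, ∀ a ∈ H, ∀ u ∈ np, v + a + u = 0 → v = 0 ∧ a = 0 ∧ u = 0)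
    (πp πm : L →ₗ[k] L)
    (hπp : ∀ a ∈ H, ∀ u ∈ np, πp (a + u) = a)
    (hπm : ∀ a ∈ H, ∀ v ∈ nm, πm (a + v) = a) :
    ∀ x : L, ∀ a ∈ H, ∃! p : L × L,
      p.1 ∈ H.toSubmodule ⊔ np.toSubmodule ∧
      p.2 ∈ H.toSubmodule ⊔ nm.toSubmodule ∧
      ((x, a) : L × L) = (p.1, πp p.1) + (p.2, -πm p.2) := by
  intro x a ha
  obtain ⟨v, hv, b, hb, u, hu, hx⟩ := hspan x
  set c : L := ((2:k)⁻¹) • (b + a) with hc_def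
  set d : L := ((2:k)⁻¹) • (b - a) with hd_def
  have hcH : c ∈ H := H.smul_mem _ (H.add_mem hb ha)
  have hdH : d ∈ H := H.smul_mem _ (H.sub_mem hb ha)
  refine ⟨(c + u, d + v), ⟨?_, ?_, ?_⟩, ?_⟩
  · exact Submodule.mem_sup.2 ⟨c, hcH, u, hu, rfl⟩
  · exact Submodule.mem_sup.2 ⟨d, hdH, v, hv, rfl⟩
  · have h1 : πp (c + u) = c := hπp c hcH u hu
    have h2 : πm (d + v) = d := hπm d hdH v hv
    refine Prod.ext ?_ ?_
    · show x = (c + u) + (d + v)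
      rw [hx, hc_def, hd_def]
      have h2 : (2:k) ≠ 0 := two_ne_zero
      match_scalars <;> field_simp <;> ring
    · show a = πp (c + u) + -πm (d + v)
      rw [h1, h2, hc_def, hd_def]
      match_scalars <;> field_simp <;> ring
  · rintro ⟨q1, q2⟩ ⟨hq1, hq2, hq⟩
    obtain ⟨c', hc', u', hu', hq1eq⟩ := Submodule.mem_sup.1 hq1
    obtain ⟨d', hd', v', hv', hq2eq⟩ := Submodule.mem_sup.1 hq2
    have hq1eq' : c' + u' = q1 := hq1eq
    have hq2eq' : d' + v' = q2 := hq2eq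
    subst hq1eq' hq2eq'
    have hfst : x = (c' + u') + (d' + v') := congrArg Prod.fst hq
    have hsnd : a = πp (c' + u') + -πm (d' + v') := congrArg Prod.snd hq
    rw [hπp c' hc' u' hu', hπm d' hd' v' hv'] at hsnd
    -- hfst : x = (c' + u') + (d' + v'), hsnd : a = c' + -d'
    have hzero : (v' - v) + ((c' + d') - b) + (u' - u) = 0 := by
      have h : c' + u' + (d' + v') = v + b + u := hfst.symm.trans hx
      calc (v' - v) + ((c' + d') - b) + (u' - u)
          = (c' + u' + (d' + v')) - (v + b + u) := by abel
        _ = 0 := by rw [h, sub_self]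
    obtain ⟨e1, e2, e3⟩ := huniq _ (nm.sub_mem hv' hv) _ (H.sub_mem (H.add_mem hc' hd') hb)
      _ (np.sub_mem hu' hu) hzero
    have hvv : v' = v := sub_eq_zero.1 e1
    have huu : u' = u := sub_eq_zero.1 e3
    have hcd : c' + d' = b := sub_eq_zero.1 e2
    have hcc : c' = c := by
      rw [hc_def]
      have : (2:k) • c' = b + a := by
        rw [← hcd]
        have : a = c' + -d' := hsnd
        rw [this]; module
      calc c' = ((2:k)⁻¹) • ((2:k) • c') := by
              rw [smul_smul, inv_mul_cancel₀ (two_ne_zero), one_smul]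
        _ = ((2:k)⁻¹) • (b + a) := by rw [this]
    have hdd : d' = d := by
      rw [hd_def]
      have h2d : (2:k) • d' = b - a := by
        rw [← hcd]
        have : a = c' + -d' := hsnd
        rw [this]; module
      calc d' = ((2:k)⁻¹) • ((2:k) • d') := by
              rw [smul_smul, inv_mul_cancel₀ (two_ne_zero), one_smul]
        _ = ((2:k)⁻¹) • (b - a) := by rw [h2d]
    rw [Prod.mk.injEq]
    exact ⟨by rw [hcc, huu], by rw [hdd, hvv]⟩
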